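/- For a standard episturmian word s with directive word x₁x₂x₃⋯, palindromic prefixes u₁ = ε, u₂, u₃, … satisfying u_{n+1} = (u_n x_n)^{(+)}, and words h_n = μ_n(x_{n+1}) where μ₀ = Id and μ_n = Ψ_{x₁}⋯Ψ_{x_n}, one has u_{n+1} = h_{n−1} u_n for all n ≥ 1; consequently u_n = h_{n−2} h_{n−3} ⋯ h₁ h₀ for all n > 1. -/

import Mathlib

/-- The prefix of length `k` of an infinite word `w : ℕ → A`. -/
def pref {A : Type*} (w : ℕ → A) (k : ℕ) : List A := (List.range k).map w

/-- `u` is a (finite) factor of the infinite word `w`. -/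
def IsFactor {A : Type*} (w : ℕ → A) (u : List A) : Prop :=
  ∃ i : ℕ, u = (List.range u.length).map (fun j => w (i + j))

/-- Prepend a letter to an infinite word. -/
def consW {A : Type*} (a : A) (s : ℕ → A) : ℕ → A := fun n => match n with
  | 0 => a
  | n + 1 => s n

/-- Concatenation of a finite word with an infinite word. -/
def catW {A : Type*} (u : List A) (w : ℕ → A) : ℕ → A := fun n =>
  if h : n < u.length then u.get ⟨n, h⟩ else w (n - u.length)

/-- `u` is the lexicographically smallest factor of `w` of length `k`,
w.r.t. the strict order `lt` on letters. -/
def IsMinFactor {A : Type*} (lt : A → A → Prop) (w : ℕ → A) (k : ℕ) (u : List A) : Prop :=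
  IsFactor w u ∧ u.length = k ∧
    ∀ v, IsFactor w v → v.length = k → u = v ∨ List.Lex lt u v

/-- `u` is the lexicographically greatest factor of `w` of length `k`. -/
def IsMaxFactor {A : Type*} (lt : A → A → Prop) (w : ℕ → A) (k : ℕ) (u : List A) : Prop :=
  IsFactor w u ∧ u.length = k ∧
    ∀ v, IsFactor w v → v.length = k → u = v ∨ List.Lex lt v u

/-- `m = min(w)`: every length-`k` prefix of `m` is the lexicographically
smallest factor of `w` of length `k`. -/
def IsMinWord {A : Type*} (lt : A → A → Prop) (w m : ℕ → A) : Prop :=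
  ∀ k : ℕ, IsMinFactor lt w k (pref m k)

/-- `m = max(w)`. -/
def IsMaxWord {A : Type*} (lt : A → A → Prop) (w m : ℕ → A) : Prop :=
  ∀ k : ℕ, IsMaxFactor lt w k (pref m k)

/-- The letter `z` is separating for `t`: every length-2 factor of `t` contains `z`. -/
def Separating {A : Type*} (z : A) (t : ℕ → A) : Prop :=
  ∀ u, IsFactor t u → u.length = 2 → z ∈ u

/-- The episturmian morphism `Ψ_z` on finite words: `z ↦ z`, `x ↦ zx` for `x ≠ z`. -/
def psiL {A : Type*} [DecidableEq A] (z : A) (u : List A) : List A :=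
  u.flatMap (fun x => if x = z then [z] else [z, x])

/-- `t = Ψ_z(y)` for infinite words: the `Ψ_z`-image of every prefix of `y`
is a prefix of `t`. -/
def PsiImage {A : Type*} [DecidableEq A] (z : A) (y t : ℕ → A) : Prop :=
  ∀ n : ℕ, psiL z (pref y n) = pref t (psiL z (pref y n)).length

/-- `u` is a left special factor of `w`. -/
def LeftSpecial {A : Type*} (w : ℕ → A) (u : List A) : Prop :=
  ∃ a b : A, a ≠ b ∧ IsFactor w (a :: u) ∧ IsFactor w (b :: u)

/-- `u` is a right special factor of `w`. -/
def RightSpecial {A : Type*} (w : ℕ → A) (u : List A) : Prop :=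
  ∃ a b : A, a ≠ b ∧ IsFactor w (u ++ [a]) ∧ IsFactor w (u ++ [b])

/-- `w` is a standard episturmian word: factors closed under reversal and
every left special factor is a prefix. -/
def StdEpisturmian {A : Type*} (w : ℕ → A) : Prop :=
  (∀ u, IsFactor w u → IsFactor w u.reverse) ∧
  (∀ u, LeftSpecial w u → u = pref w u.length)

/-- `w` is an `A`-strict standard episturmian word (standard Arnoux-Rauzy sequence):
standard episturmian and every prefix has every letter as a left extension. -/
def StrictStdEpisturmian {A : Type*} (w : ℕ → A) : Prop :=
  StdEpisturmian w ∧ ∀ (n : ℕ) (a : A), IsFactor w (a :: pref w n)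

/-- `w` is episturmian: factors closed under reversal and at most one right
special factor of each length. -/
def Episturmian {A : Type*} (w : ℕ → A) : Prop :=
  (∀ u, IsFactor w u → IsFactor w u.reverse) ∧
  (∀ u v, RightSpecial w u → RightSpecial w v → u.length = v.length → u = v)

/-- `w` is an `A`-strict episturmian word: it has the same set of factors as some
`A`-strict standard episturmian word. -/
def StrictEpisturmian {A : Type*} (w : ℕ → A) : Prop :=
  ∃ s : ℕ → A, StrictStdEpisturmian s ∧ ∀ u, IsFactor w u ↔ IsFactor s u

/-- `t` is fine: there is an infinite word `s` such that for every total order on the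
alphabet and every letter `a` minimal for that order, `min(t) = a·s`. -/
def Fine {A : Type*} (t : ℕ → A) : Prop :=
  ∃ s : ℕ → A, ∀ (l : LinearOrder A) (a : A), (∀ b, l.le a b) →
    IsMinWord l.lt t (consW a s)

/-- `p` is the palindromic right-closure of `w`: the shortest palindrome having `w`
as a prefix. -/
def IsPalClosure {A : Type*} (w p : List A) : Prop :=
  p.reverse = p ∧ w <+: p ∧ ∀ q : List A, q.reverse = q → w <+: q → p.length ≤ q.length

/-- `μ_n = Ψ_{x₁} ∘ Ψ_{x₂} ∘ ⋯ ∘ Ψ_{xₙ}` for the directive word `x₁x₂x₃⋯`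
(given as `x : ℕ → A` with letters `x 1, x 2, …`); `μ_0 = Id`. -/
def muM {A : Type*} [DecidableEq A] (x : ℕ → A) (n : ℕ) : List A → List A :=
  ((List.range n).map (fun i => x (i + 1))).foldr (fun c f => psiL c ∘ f) id

/-- `h_n = μ_n(x_{n+1})`. -/
def hW {A : Type*} [DecidableEq A] (x : ℕ → A) (n : ℕ) : List A :=
  muM x n [x (n + 1)]

namespace Stmt19

set_option linter.unusedSectionVars false

variable {A : Type*} [DecidableEq A]

/-- companion morphism `x ↦ xa`. -/
def barPsi (a : A) (u : List A) : List A :=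
  u.flatMap (fun x => if x = a then [a] else [x, a])

lemma psiL_nil (a : A) : psiL a ([] : List A) = [] := rfl

lemma psiL_append (a : A) (u v : List A) : psiL a (u ++ v) = psiL a u ++ psiL a v :=
  List.flatMap_append

lemma psiL_cons (a x : A) (u : List A) :
    psiL a (x :: u) = (if x = a then [a] else [a, x]) ++ psiL a u := by
  rw [psiL, List.flatMap_cons]
  by_cases h : x = a <;> simp [h, psiL]

lemma psiL_cons' (a x : A) (u : List A) : ∃ r, psiL a (x :: u) = a :: r := by
  rw [psiL_cons]; split <;> exact ⟨_, rfl⟩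

lemma psiL_singleton_self (a : A) : psiL a [a] = [a] := by simp [psiL]

lemma psiL_singleton (a y : A) (h : y ≠ a) : psiL a [y] = [a, y] := by simp [psiL, h]

lemma barPsi_nil (a : A) : barPsi a ([] : List A) = [] := rfl

lemma barPsi_cons (a x : A) (u : List A) :
    barPsi a (x :: u) = (if x = a then [a] else [x, a]) ++ barPsi a u := by
  rw [barPsi, List.flatMap_cons]
  by_cases h : x = a <;> simp [h, barPsi]

lemma barPsi_append (a : A) (u v : List A) : barPsi a (u ++ v) = barPsi a u ++ barPsi a v :=
  List.flatMap_append

/-- key identity: `Ψ_a(u)·a = a·Ψ̄_a(u)` -/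
lemma psiL_append_singleton (a : A) (u : List A) :
    psiL a u ++ [a] = a :: barPsi a u := by
  induction u with
  | nil => rfl
  | cons x u ih =>
    rw [psiL_cons, barPsi_cons]
    by_cases h : x = a <;> simp [h, List.append_assoc, ih]

lemma reverse_psiL (a : A) (u : List A) :
    (psiL a u).reverse = barPsi a u.reverse := by
  induction u with
  | nil => rfl
  | cons x u ih =>
    rw [psiL_cons, List.reverse_append, ih, List.reverse_cons, barPsi_append]
    by_cases h : x = a <;> simp [h, barPsi_cons, barPsi_nil]

lemma reverse_barPsi (a : A) (u : List A) :
    (barPsi a u).reverse = psiL a u.reverse := by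
  have := reverse_psiL a u.reverse
  rw [List.reverse_reverse] at this
  rw [← this, List.reverse_reverse]

lemma length_barPsi (a : A) (u : List A) : (barPsi a u).length = (psiL a u).length := by
  induction u with
  | nil => rfl
  | cons x u ih =>
    rw [psiL_cons, barPsi_cons]
    by_cases h : x = a <;> simp [h, ih]

lemma length_psiL_reverse (a : A) (u : List A) :
    (psiL a u.reverse).length = (psiL a u).length := by
  rw [← reverse_barPsi, List.length_reverse, length_barPsi]

lemma psiL_injective (a : A) : ∀ {u v : List A}, psiL a u = psiL a v → u = v := by
  intro u
  induction u with
  | nil =>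
    intro v h
    cases v with
    | nil => rfl
    | cons y v' =>
      obtain ⟨r, hr⟩ := psiL_cons' a y v'
      rw [psiL_nil, hr] at h; exact absurd h.symm (by simp)
  | cons x u' ih =>
    intro v h
    cases v with
    | nil =>
      obtain ⟨r, hr⟩ := psiL_cons' a x u'
      rw [psiL_nil, hr] at h; exact absurd h (by simp)
    | cons y v' =>
      rw [psiL_cons, psiL_cons] at h
      by_cases hx : x = a <;> by_cases hy : y = a
      · rw [if_pos hx, if_pos hy] at h
        simp only [List.cons_append, List.nil_append] at h
        injection h with _ h2
        rw [hx, hy, ih h2]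
      · rw [if_pos hx, if_neg hy] at h
        simp only [List.cons_append, List.nil_append] at h
        injection h with _ h2
        exfalso
        cases u' with
        | nil => rw [psiL_nil] at h2; exact absurd h2.symm (by simp)
        | cons z u'' =>
          obtain ⟨r, hr⟩ := psiL_cons' a z u''
          rw [hr] at h2
          injection h2 with h3 _
          exact hy h3.symm
      · rw [if_neg hx, if_pos hy] at h
        simp only [List.cons_append, List.nil_append] at h
        injection h with _ h2
        exfalso
        cases v' with
        | nil => rw [psiL_nil] at h2; exact absurd h2 (by simp)
        | cons z v'' =>
          obtain ⟨r, hr⟩ := psiL_cons' a z v''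
          rw [hr] at h2
          injection h2 with h3 _
          exact hx h3
      · rw [if_neg hx, if_neg hy] at h
        simp only [List.cons_append, List.nil_append] at h
        injection h with _ h2
        injection h2 with h3 h4
        rw [h3, ih h4]


lemma suffix_append_cases {s X B : List A} (h : s <:+ X ++ B) :
    s <:+ B ∨ ∃ s₁, s₁ <:+ X ∧ s = s₁ ++ B := by
  obtain ⟨c, hc⟩ := h
  rcases List.append_eq_append_iff.mp hc with ⟨a', h1, h2⟩ | ⟨c', h1, h2⟩
  · exact Or.inr ⟨a', ⟨c, h1.symm⟩, h2⟩
  · exact Or.inl ⟨c', h2.symm⟩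

lemma suffix_psiL (a : A) : ∀ (w : List A) {s : List A}, s <:+ psiL a w →
    s = [] ∨ (∃ t, t <:+ w ∧ s = psiL a t) ∨
      ∃ y t, y ≠ a ∧ (y :: t) <:+ w ∧ s = y :: psiL a t := by
  intro w
  induction w with
  | nil => intro s h; left; rw [psiL_nil] at h; exact List.suffix_nil.mp h
  | cons x w ih =>
    intro s h
    rw [psiL_cons] at h
    rcases suffix_append_cases h with h' | ⟨s₁, hs₁, rfl⟩
    · rcases ih h' with rfl | ⟨t, ht, rfl⟩ | ⟨y, t, hy, ht, rfl⟩
      · exact Or.inl rfl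
      · exact Or.inr (Or.inl ⟨t, ht.trans (List.suffix_cons x w), rfl⟩)
      · exact Or.inr (Or.inr ⟨y, t, hy, ht.trans (List.suffix_cons x w), rfl⟩)
    · by_cases hx : x = a
      · rw [if_pos hx] at hs₁
        rcases List.suffix_cons_iff.mp hs₁ with rfl | hs₁
        · refine Or.inr (Or.inl ⟨x :: w, List.suffix_refl _, ?_⟩)
          rw [psiL_cons, if_pos hx]
        · rw [List.suffix_nil.mp hs₁, List.nil_append]
          exact Or.inr (Or.inl ⟨w, List.suffix_cons x w, rfl⟩)
      · rw [if_neg hx] at hs₁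
        rcases List.suffix_cons_iff.mp hs₁ with rfl | hs₁
        · refine Or.inr (Or.inl ⟨x :: w, List.suffix_refl _, ?_⟩)
          rw [psiL_cons, if_neg hx]
        rcases List.suffix_cons_iff.mp hs₁ with rfl | hs₁
        · exact Or.inr (Or.inr ⟨x, w, hx, List.suffix_refl _, rfl⟩)
        · rw [List.suffix_nil.mp hs₁, List.nil_append]
          exact Or.inr (Or.inl ⟨w, List.suffix_cons x w, rfl⟩)

lemma overlap {q v z : List A} (hq : q.reverse = q) (he : q = v ++ z)
    (hl : z.length ≤ v.length) :
    z = (v.take z.length).reverse ∧ (v.drop z.length).reverse = v.drop z.length := by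
  have h1 : z.reverse ++ v.reverse = v ++ z := by
    rw [← List.reverse_append, ← he, hq, he]
  have h2 : z.reverse = v.take z.length := by
    have h3 := congrArg (List.take z.length) h1
    rwa [List.take_left' (by simp), List.take_append_of_le_length hl] at h3
  constructor
  · rw [← h2, List.reverse_reverse]
  · have h4 := congrArg (List.drop z.length) h1
    rw [List.drop_append_of_le_length (by simp),
      List.drop_append_of_le_length hl, List.drop_of_length_le (by simp),
      List.nil_append] at h4
    -- h4 : v.reverse = v.drop z.length ++ z
    have h5 : v.reverse = (v.drop z.length).reverse ++ z := by
      conv_lhs => rw [← List.take_append_drop z.length v]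
      rw [List.reverse_append, ← h2, List.reverse_reverse]
    rw [h4] at h5
    exact (List.append_cancel_right h5).symm

lemma pal_of_palSuffix {w c t : List A} (he : w = c ++ t) (ht : t.reverse = t) :
    (w ++ c.reverse).reverse = w ++ c.reverse := by
  subst he
  rw [List.reverse_append, List.reverse_reverse, List.reverse_append, ht,
    List.append_assoc]

lemma suffix_of_suffix_of_length_le {t t' w : List A} (h : t <:+ w) (h' : t' <:+ w)
    (hl : t.length ≤ t'.length) : t <:+ t' := by
  obtain ⟨c, hc⟩ := h
  obtain ⟨c', hc'⟩ := h'
  have h1 : t = w.drop c.length := by rw [← hc, List.drop_left]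
  have h2 : t' = w.drop c'.length := by rw [← hc', List.drop_left]
  have hcl : c'.length ≤ c.length := by
    have e1 := congrArg List.length hc
    have e2 := congrArg List.length hc'
    simp only [List.length_append] at e1 e2
    omega
  have h3 : t = t'.drop (c.length - c'.length) := by
    rw [h1, h2, List.drop_drop]
    congr 1
    omega
  rw [h3]
  exact List.drop_suffix _ _

lemma pal_psiL {a : A} {t : List A} (ht : t.reverse = t) :
    (psiL a t ++ [a]).reverse = psiL a t ++ [a] := by
  rw [psiL_append_singleton, List.reverse_cons, reverse_barPsi, ht, psiL_append_singleton]

lemma pal_of_pal_psiL {a : A} {t : List A}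
    (h : (psiL a t ++ [a]).reverse = psiL a t ++ [a]) : t.reverse = t := by
  rw [psiL_append_singleton, List.reverse_cons, reverse_barPsi] at h
  rw [← psiL_append_singleton] at h
  have := List.append_cancel_right h
  exact psiL_injective a this

lemma palClosure_length_le_two {w p : List A} (h : IsPalClosure w p) :
    p.length ≤ 2 * w.length := by
  have := h.2.2 (w ++ w.reverse) (by rw [List.reverse_append, List.reverse_reverse])
    (List.prefix_append _ _)
  simpa [two_mul] using this

lemma palClosure_length_lt_two {w p : List A} (h : IsPalClosure w p) (hw : w ≠ []) :
    p.length + 1 ≤ 2 * w.length := by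
  rcases List.eq_nil_or_concat w with rfl | ⟨c, l, rfl⟩
  · exact absurd rfl hw
  · rw [List.concat_eq_append] at *
    have hpal : ((c ++ [l]) ++ c.reverse).reverse = (c ++ [l]) ++ c.reverse :=
      pal_of_palSuffix rfl (by simp)
    have := h.2.2 _ hpal (List.prefix_append _ _)
    simp only [List.length_append, List.length_reverse, List.length_singleton] at this ⊢
    omega

lemma palClosure_unique {w p q : List A} (hp : IsPalClosure w p)
    (hq : IsPalClosure w q) : p = q := by
  have hl : p.length = q.length :=
    le_antisymm (hp.2.2 q hq.1 hq.2.1) (hq.2.2 p hp.1 hp.2.1)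
  obtain ⟨z, hz⟩ := hp.2.1
  obtain ⟨z', hz'⟩ := hq.2.1
  subst hz; subst hz'
  have hb := palClosure_length_le_two hp
  have hb' := palClosure_length_le_two hq
  simp only [List.length_append] at hl hb hb'
  have h1 := (overlap hp.1 rfl (by omega)).1
  have h2 := (overlap hq.1 rfl (by omega)).1
  have hzz : z.length = z'.length := by omega
  have hzeq : z = z' := by rw [h1, hzz, ← h2]
  rw [hzeq]


/-- Key Lemma J: `(Ψ_a(w)·a)⁽⁺⁾ = Ψ_a(w⁽⁺⁾)·a`. -/
lemma lemJ {a : A} {w p : List A} (h : IsPalClosure w p) :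
    IsPalClosure (psiL a w ++ [a]) (psiL a p ++ [a]) := by
  obtain ⟨hpal, hpref, hmin⟩ := h
  obtain ⟨z, rfl⟩ := hpref
  have hble : (w ++ z).length ≤ 2 * w.length := by
    have := hmin (w ++ w.reverse)
      (by rw [List.reverse_append, List.reverse_reverse]) (List.prefix_append _ _)
    simpa [two_mul] using this
  have hzw : z.length ≤ w.length := by
    simp only [List.length_append] at hble; omega
  obtain ⟨hz, -⟩ := overlap hpal rfl hzw
  have hsplit : (psiL a w).length =
      (psiL a (w.take z.length)).length + (psiL a (w.drop z.length)).length := by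
    conv_lhs => rw [← List.take_append_drop z.length w]
    rw [psiL_append, List.length_append]
  have hpz : (psiL a z).length = (psiL a (w.take z.length)).length := by
    conv_lhs => rw [hz]
    rw [length_psiL_reverse]
  refine ⟨pal_psiL hpal, ?_, ?_⟩
  · rw [psiL_append, List.append_assoc, List.prefix_append_right_inj]
    cases z with
    | nil => rw [psiL_nil, List.nil_append]
    | cons c z' =>
      obtain ⟨r, hr⟩ := psiL_cons' a c z'
      rw [hr]
      exact ⟨r ++ [a], by simp⟩
  · intro q hqpal hqpref
    have hvq := hqpref.length_le
    simp only [List.length_append, psiL_append, List.length_singleton] at hvq ⊢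
    by_cases hc : 2 * ((psiL a w).length + 1) ≤ q.length
    · omega
    · push_neg at hc
      obtain ⟨zq, hzq⟩ := hqpref
      have hql : q.length = (psiL a w).length + 1 + zq.length := by
        have := congrArg List.length hzq
        simp only [List.length_append, List.length_singleton] at this
        omega
      have hzql : zq.length ≤ (psiL a w ++ [a]).length := by
        simp only [List.length_append, List.length_singleton]
        omega
      obtain ⟨-, hspal'⟩ := overlap hqpal hzq.symm hzql
      obtain ⟨s, hsdef⟩ : ∃ s, (psiL a w ++ [a]).drop zq.length = s := ⟨_, rfl⟩
      rw [hsdef] at hspal'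
      have hsfx : s <:+ psiL a w ++ [a] := hsdef ▸ List.drop_suffix _ _
      have hslen : s.length = (psiL a w).length + 1 - zq.length := by
        rw [← hsdef, List.length_drop, List.length_append, List.length_singleton]
      have hsne : s ≠ [] := by
        intro hnil
        rw [hnil] at hslen
        simp only [List.length_nil] at hslen
        omega
      have hkey : ∃ t, t <:+ w ∧ t.reverse = t ∧ s = psiL a t ++ [a] := by
        rcases suffix_append_cases hsfx with h' | ⟨s₁, hs₁, hseq⟩
        · rcases List.suffix_cons_iff.mp h' with hsa | h''
          · exact ⟨[], List.nil_suffix, rfl, by rw [hsa, psiL_nil, List.nil_append]⟩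
          · exact absurd (List.suffix_nil.mp h'') hsne
        · rcases suffix_psiL a w hs₁ with rfl | ⟨t, ht, rfl⟩ | ⟨y, t, hy, hyt, rfl⟩
          · rw [List.nil_append] at hseq
            exact ⟨[], List.nil_suffix, rfl, by rw [hseq, psiL_nil, List.nil_append]⟩
          · refine ⟨t, ht, ?_, hseq⟩
            rw [hseq] at hspal'
            exact pal_of_pal_psiL hspal'
          · exfalso
            rw [hseq] at hspal'
            rw [List.reverse_append, List.reverse_cons] at hspal'
            simp only [List.reverse_cons, List.reverse_nil, List.nil_append,
              List.cons_append, List.singleton_append, List.append_assoc] at hspal'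
            injection hspal' with h1 _
            exact hy h1.symm
      obtain ⟨t, htw, htpal, hseqt⟩ := hkey
      obtain ⟨c, hcw⟩ := htw
      have hq2 := hmin (w ++ c.reverse) (pal_of_palSuffix hcw.symm htpal)
        (List.prefix_append _ _)
      have hct : c.length + t.length = w.length := by
        have := congrArg List.length hcw
        simpa using this
      have hzt : z.length + t.length ≤ w.length := by
        simp only [List.length_append, List.length_reverse] at hq2
        omega
      have htD : t <:+ w.drop z.length :=
        suffix_of_suffix_of_length_le ⟨c, hcw⟩ (List.drop_suffix _ _)
          (by rw [List.length_drop]; omega)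
      obtain ⟨c₂, hc₂⟩ := htD
      have hsplit2 : (psiL a (w.drop z.length)).length =
          (psiL a c₂).length + (psiL a t).length := by
        rw [← hc₂, psiL_append, List.length_append]
      have hsl2 : s.length = (psiL a t).length + 1 := by
        rw [hseqt, List.length_append, List.length_singleton]
      omega

/-- Key Lemma J': if the last letter of `w` differs from `a` then
`(Ψ_a(w))⁽⁺⁾ = Ψ_a(w⁽⁺⁾)·a`. -/
lemma lemJ' {a : A} {w p : List A} (hw : ∃ w₀ b, b ≠ a ∧ w = w₀ ++ [b])
    (h : IsPalClosure w p) :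
    IsPalClosure (psiL a w) (psiL a p ++ [a]) := by
  obtain ⟨w₀, b, hba, hwdef⟩ := hw
  obtain ⟨hpal, hpref, hmin⟩ := h
  obtain ⟨z, rfl⟩ := hpref
  have hq0 := hmin (w ++ w₀.reverse)
    (pal_of_palSuffix hwdef (by simp)) (List.prefix_append _ _)
  have hwlen : w.length = w₀.length + 1 := by
    rw [hwdef, List.length_append, List.length_singleton]
  have hzw1 : z.length + 1 ≤ w.length := by
    simp only [List.length_append, List.length_reverse] at hq0
    omega
  obtain ⟨hz, -⟩ := overlap hpal rfl (by omega)
  have hsplit : (psiL a w).length =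
      (psiL a (w.take z.length)).length + (psiL a (w.drop z.length)).length := by
    conv_lhs => rw [← List.take_append_drop z.length w]
    rw [psiL_append, List.length_append]
  have hpz : (psiL a z).length = (psiL a (w.take z.length)).length := by
    conv_lhs => rw [hz]
    rw [length_psiL_reverse]
  have hpD1 : 1 ≤ (psiL a (w.drop z.length)).length := by
    rcases hD : w.drop z.length with _ | ⟨d, D'⟩
    · have := congrArg List.length hD
      rw [List.length_drop] at this
      simp only [List.length_nil] at this
      omega
    · obtain ⟨r, hr⟩ := psiL_cons' a d D'
      rw [hr, List.length_cons]
      omega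
  refine ⟨pal_psiL hpal,
    ⟨psiL a z ++ [a], by rw [psiL_append a w z, List.append_assoc]⟩, ?_⟩
  intro q hqpal hqpref
  have hvq := hqpref.length_le
  have hM : (psiL a (w ++ z) ++ [a]).length =
      (psiL a w).length + (psiL a z).length + 1 := by
    rw [psiL_append a w z]
    simp [List.length_append]
    omega
  rw [hM]
  by_cases hc : 2 * (psiL a w).length ≤ q.length
  · omega
  · push_neg at hc
    obtain ⟨zq, hzq⟩ := hqpref
    have hql : q.length = (psiL a w).length + zq.length := by
      have := congrArg List.length hzq
      simp only [List.length_append] at this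
      omega
    have hzql : zq.length ≤ (psiL a w).length := by omega
    obtain ⟨-, hspal'⟩ := overlap hqpal hzq.symm hzql
    obtain ⟨s, hsdef⟩ : ∃ s, (psiL a w).drop zq.length = s := ⟨_, rfl⟩
    rw [hsdef] at hspal'
    have hsfx : s <:+ psiL a w := hsdef ▸ List.drop_suffix _ _
    have hslen : s.length = (psiL a w).length - zq.length := by
      rw [← hsdef, List.length_drop]
    have hsne : s ≠ [] := by
      intro hnil
      rw [hnil] at hslen
      simp only [List.length_nil] at hslen
      omega
    have hwform : psiL a w = (psiL a w₀ ++ [a]) ++ [b] := by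
      rw [hwdef, psiL_append, psiL_singleton a b hba, List.append_assoc]
      rfl
    have hsendb : ∃ s', s = s' ++ [b] := by
      have hsfx2 : s <:+ (psiL a w₀ ++ [a]) ++ [b] := hwform ▸ hsfx
      rcases suffix_append_cases hsfx2 with h' | ⟨s', _, hseq⟩
      · rcases List.suffix_cons_iff.mp h' with hsb | h''
        · exact ⟨[], by rw [hsb, List.nil_append]⟩
        · exact absurd (List.suffix_nil.mp h'') hsne
      · exact ⟨s', hseq⟩
    obtain ⟨s', hs'⟩ := hsendb
    have hshead : s = b :: s'.reverse := by
      conv_lhs => rw [← hspal', hs', List.reverse_append]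
      rfl
    rcases suffix_psiL a w hsfx with rfl | ⟨t, ht, hst⟩ | ⟨y, t, hy, hyt, hst⟩
    · exact absurd rfl hsne
    · exfalso
      cases t with
      | nil => rw [psiL_nil] at hst; exact hsne hst
      | cons d t' =>
        obtain ⟨r, hr⟩ := psiL_cons' a d t'
        rw [hr] at hst
        rw [hshead] at hst
        injection hst with h1 _
        exact hba h1
    · have hyt_pal : (y :: t).reverse = y :: t := by
        have hcomp : psiL a (t.reverse ++ [y]) = psiL a (y :: t) := by
          rw [psiL_append, psiL_singleton a y hy]
          have e1 : psiL a t.reverse ++ [a, y] = (psiL a t.reverse ++ [a]) ++ [y] := by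
            rw [List.append_assoc]; rfl
          rw [e1, psiL_append_singleton]
          have e2 : barPsi a t.reverse ++ [y] = y :: psiL a t := by
            rw [← reverse_psiL, ← List.reverse_cons, ← hst, hspal', hst]
          rw [psiL_cons, if_neg hy]
          simp only [List.cons_append, List.nil_append]
          rw [e2]
        have := psiL_injective a hcomp
        rw [List.reverse_cons, this]
      obtain ⟨m, hm⟩ := hyt
      have hq2 := hmin (w ++ m.reverse) (pal_of_palSuffix hm.symm hyt_pal)
        (List.prefix_append _ _)
      have hmlen : m.length + (t.length + 1) = w.length := by
        have := congrArg List.length hm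
        simpa using this
      have hzt : z.length + t.length + 1 ≤ w.length := by
        simp only [List.length_append, List.length_reverse] at hq2
        omega
      have hytD : (y :: t) <:+ w.drop z.length :=
        suffix_of_suffix_of_length_le ⟨m, hm⟩ (List.drop_suffix _ _)
          (by rw [List.length_drop, List.length_cons]; omega)
      obtain ⟨c₂, hc₂⟩ := hytD
      have hsplit2 : (psiL a (w.drop z.length)).length =
          (psiL a c₂).length + ((psiL a t).length + 2) := by
        rw [← hc₂, psiL_append, List.length_append, psiL_cons, if_neg hy]
        simp
      have hsl2 : s.length = (psiL a t).length + 1 := by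
        rw [hst, List.length_cons]
      omega


/-- iterated palindromic closure, computed from the directive word by Justin's formula -/
def Pal : List A → List A
  | [] => []
  | a :: v => psiL a (Pal v) ++ [a]

lemma Pal_nil : Pal ([] : List A) = [] := rfl

lemma Pal_cons (a : A) (v : List A) : Pal (a :: v) = psiL a (Pal v) ++ [a] := rfl

lemma palClosure_Pal (v : List A) (b : A) :
    IsPalClosure (Pal v ++ [b]) (Pal (v ++ [b])) := by
  induction v with
  | nil =>
    refine ⟨by simp [Pal, psiL_nil], by simp [Pal, psiL_nil], ?_⟩
    intro q _ hq
    have := hq.length_le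
    simpa [Pal, psiL_nil] using this
  | cons a v ih =>
    by_cases hba : b = a
    · subst hba
      have h2 := lemJ (a := b) ih
      have e1 : psiL b (Pal v ++ [b]) ++ [b] = Pal (b :: v) ++ [b] := by
        rw [psiL_append, psiL_singleton_self, Pal_cons]
      have e2 : psiL b (Pal (v ++ [b])) ++ [b] = Pal ((b :: v) ++ [b]) := by
        rw [List.cons_append, Pal_cons]
      rw [e1, e2] at h2
      exact h2
    · have h2 := lemJ' (a := a) ⟨Pal v, b, hba, rfl⟩ ih
      have e1 : psiL a (Pal v ++ [b]) = Pal (a :: v) ++ [b] := by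
        rw [psiL_append, psiL_singleton a b hba, Pal_cons, List.append_assoc]
        rfl
      have e2 : psiL a (Pal (v ++ [b])) ++ [a] = Pal ((a :: v) ++ [b]) := by
        rw [List.cons_append, Pal_cons]
      rw [e1, e2] at h2
      exact h2

/-- composition of the morphisms along a finite directive word -/
def Mfold (v : List A) : List A → List A := v.foldr (fun c f => psiL c ∘ f) id

lemma Mfold_nil (l : List A) : Mfold [] l = l := rfl

lemma Mfold_cons (a : A) (v : List A) (l : List A) :
    Mfold (a :: v) l = psiL a (Mfold v l) := rfl

/-- Justin's formula, list version -/
lemma Pal_append_singleton : ∀ (v : List A) (b : A),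
    Pal (v ++ [b]) = Mfold v [b] ++ Pal v := by
  intro v
  induction v with
  | nil => intro b; simp [Pal, Mfold, psiL_nil]
  | cons a v ih =>
    intro b
    rw [List.cons_append, Pal_cons, ih, psiL_append, List.append_assoc,
      Mfold_cons, Pal_cons]

end Stmt19

/-- Justin's formula: for the palindromic prefixes `u₁ = ε`, `u_{n+1} = (u_n x_n)⁽⁺⁾`
of a standard episturmian word directed by `x₁x₂x₃⋯`, one has
`u_{n+1} = h_{n-1} u_n` for `n ≥ 1`, and hence `u_n = h_{n-2} h_{n-3} ⋯ h₁ h₀`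
for `n > 1`. -/
theorem stmt_19 {A : Type*} [DecidableEq A] (x : ℕ → A) (u : ℕ → List A)
    (h1 : u 1 = []) (hrec : ∀ n : ℕ, 1 ≤ n → IsPalClosure (u n ++ [x n]) (u (n + 1))) :
    (∀ n : ℕ, 1 ≤ n → u (n + 1) = hW x (n - 1) ++ u n) ∧
    (∀ n : ℕ, 1 < n → u n = ((List.range (n - 1)).reverse.map (hW x)).flatten) := by
  have hdsucc : ∀ n : ℕ, (List.range (n+1)).map (fun i => x (i+1)) =
      (List.range n).map (fun i => x (i+1)) ++ [x (n+1)] := by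
    intro n
    rw [List.range_succ, List.map_append]
    rfl
  have hWeq : ∀ m : ℕ, hW x m =
      Stmt19.Mfold ((List.range m).map (fun i => x (i+1))) [x (m+1)] := fun m => rfl
  have key : ∀ n : ℕ, 1 ≤ n →
      u n = Stmt19.Pal ((List.range (n-1)).map (fun i => x (i+1))) := by
    intro n hn
    induction n, hn using Nat.le_induction with
    | base =>
      rw [h1]
      rfl
    | succ n hn ih =>
      have hcl := hrec n hn
      rw [ih] at hcl
      have hK := Stmt19.palClosure_Pal ((List.range (n-1)).map (fun i => x (i+1))) (x n)
      have hdd : (List.range (n-1)).map (fun i => x (i+1)) ++ [x n] =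
          (List.range n).map (fun i => x (i+1)) := by
        obtain ⟨m, rfl⟩ : ∃ m, n = m + 1 := ⟨n - 1, by omega⟩
        rw [Nat.add_sub_cancel, ← hdsucc]
      rw [hdd] at hK
      have := Stmt19.palClosure_unique hcl hK
      rw [Nat.add_sub_cancel]
      exact this
  have part1 : ∀ n : ℕ, 1 ≤ n → u (n + 1) = hW x (n - 1) ++ u n := by
    intro n hn
    obtain ⟨m, rfl⟩ : ∃ m, n = m + 1 := ⟨n - 1, by omega⟩
    have h1' := key (m + 2) (by omega)
    have h2' := key (m + 1) (by omega)
    rw [show m + 2 - 1 = m + 1 from rfl] at h1'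
    rw [Nat.add_sub_cancel] at h2'
    rw [Nat.add_sub_cancel]
    rw [show m + 1 + 1 = m + 2 from rfl, h1', hdsucc,
      Stmt19.Pal_append_singleton, ← h2', hWeq]
  refine ⟨part1, ?_⟩
  intro n hn
  induction n, hn using Nat.le_induction with
  | base =>
    have e := part1 1 le_rfl
    rw [show Nat.succ 1 = 1 + 1 from rfl, e, h1]
    rw [show List.range 1 = [0] from rfl]
    simp
  | succ n hn ih =>
    have e := part1 n (by omega)
    rw [e, ih]
    rw [Nat.add_sub_cancel]
    obtain ⟨m, rfl⟩ : ∃ m, n = m + 1 := ⟨n - 1, by omega⟩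
    rw [Nat.add_sub_cancel, List.range_succ]
    simp
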